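/- Let g₁, g₂ : [0,1] → [0,1] be continuous surjective piecewise affine Lebesgue-measure-preserving maps with finitely many breakpoints. Denote by #(g) the number of type II breakpoints of g (interior points where the left and right derivatives have opposite signs). Then #(g₁ ∘ g₂) ≥ #(g₁) + #(g₂). -/

import Mathlib

open Set MeasureTheory

/-- `x` is a type II breakpoint of `g`: an interior point around which `g` is
affine on both sides with one-sided slopes of opposite signs. -/
def IsTypeII (g : ℝ → ℝ) (x : ℝ) : Prop :=
  0 < x ∧ x < 1 ∧ ∃ δ > 0, ∃ s₁ b₁ s₂ b₂ : ℝ, s₁ * s₂ < 0 ∧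
    (∀ z ∈ Icc (x - δ) x, g z = s₁ * z + b₁) ∧
    (∀ z ∈ Icc x (x + δ), g z = s₂ * z + b₂)

/-- `g` is piecewise affine on `[0,1]` with finitely many pieces. -/
def PWAffine (g : ℝ → ℝ) : Prop :=
  ∃ (n : ℕ) (p : ℕ → ℝ), 0 < n ∧ p 0 = 0 ∧ p n = 1 ∧
    (∀ i < n, p i < p (i + 1)) ∧
    ∀ i < n, ∃ s b : ℝ, ∀ x ∈ Icc (p i) (p (i + 1)), g x = s * x + b


private lemma aff_unique {f : ℝ → ℝ} {a b s c s' c' : ℝ} (hab : a < b)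
    (h1 : ∀ z ∈ Icc a b, f z = s * z + c) (h2 : ∀ z ∈ Icc a b, f z = s' * z + c') :
    s = s' := by
  have e1 : s * a + c = s' * a + c' := by
    rw [← h1 a ⟨le_rfl, hab.le⟩, h2 a ⟨le_rfl, hab.le⟩]
  have e2 : s * b + c = s' * b + c' := by
    rw [← h1 b ⟨hab.le, le_rfl⟩, h2 b ⟨hab.le, le_rfl⟩]
  have hba : b - a ≠ 0 := sub_ne_zero.mpr hab.ne'
  have h3 : s * (b - a) = s' * (b - a) := by ring_nf; linarith
  exact mul_right_cancel₀ hba h3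

private lemma pmono {n : ℕ} {p : ℕ → ℝ} (hlt : ∀ i < n, p i < p (i + 1)) :
    ∀ j ≤ n, ∀ i < j, p i < p j := by
  intro j
  induction j with
  | zero => intro _ i hi; omega
  | succ k ih =>
    intro hk i hi
    rcases Nat.lt_succ_iff_lt_or_eq.mp hi with h | h
    · exact (ih (by omega) i h).trans (hlt k (by omega))
    · subst h; exact hlt i (by omega)

private lemma pmono_le {n : ℕ} {p : ℕ → ℝ} (hlt : ∀ i < n, p i < p (i + 1)) :
    ∀ j ≤ n, ∀ i ≤ j, p i ≤ p j := by
  intro j hj i hi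
  rcases Nat.lt_or_ge i j with h | h
  · exact (pmono hlt j hj i h).le
  · have : i = j := le_antisymm hi h
    simp [this]

private lemma piece_left {n : ℕ} {p : ℕ → ℝ} (hn : 0 < n) (hp0 : p 0 = 0) (hp1 : p n = 1)
    (hlt : ∀ i < n, p i < p (i + 1)) {x : ℝ} (hx0 : 0 < x) (hx1 : x ≤ 1) :
    ∃ i < n, p i < x ∧ x ≤ p (i + 1) := by
  classical
  set S : Finset ℕ := (Finset.range (n + 1)).filter (fun i => p i < x) with hS
  have h0S : 0 ∈ S := by
    simp only [hS, Finset.mem_filter, Finset.mem_range]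
    exact ⟨by omega, by rw [hp0]; exact hx0⟩
  have hne : S.Nonempty := ⟨0, h0S⟩
  set i := S.max' hne with hi
  have hiS : i ∈ S := S.max'_mem hne
  simp only [hS, Finset.mem_filter, Finset.mem_range] at hiS
  have hile : i ≤ n := by omega
  have hin : i ≠ n := by
    intro h; rw [h, hp1] at hiS; linarith [hiS.2]
  refine ⟨i, by omega, hiS.2, ?_⟩
  by_contra h
  push_neg at h
  have : i + 1 ∈ S := by
    simp only [hS, Finset.mem_filter, Finset.mem_range]
    exact ⟨by omega, h⟩
  have := S.le_max' _ this
  omega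

private lemma piece_right {n : ℕ} {p : ℕ → ℝ} (hn : 0 < n) (hp0 : p 0 = 0) (hp1 : p n = 1)
    (hlt : ∀ i < n, p i < p (i + 1)) {x : ℝ} (hx0 : 0 ≤ x) (hx1 : x < 1) :
    ∃ i < n, p i ≤ x ∧ x < p (i + 1) := by
  classical
  set S : Finset ℕ := (Finset.range (n + 1)).filter (fun i => x < p i) with hS
  have hnS : n ∈ S := by
    simp only [hS, Finset.mem_filter, Finset.mem_range]
    exact ⟨by omega, by rw [hp1]; exact hx1⟩
  have hne : S.Nonempty := ⟨n, hnS⟩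
  set j := S.min' hne with hj
  have hjS : j ∈ S := S.min'_mem hne
  simp only [hS, Finset.mem_filter, Finset.mem_range] at hjS
  have hj0 : j ≠ 0 := by
    intro h; rw [h, hp0] at hjS; linarith [hjS.2]
  refine ⟨j - 1, by omega, ?_, ?_⟩
  · by_contra h
    push_neg at h
    have : j - 1 ∈ S := by
      simp only [hS, Finset.mem_filter, Finset.mem_range]
      exact ⟨by omega, h⟩
    have := S.min'_le _ this
    omega
  · have : j - 1 + 1 = j := by omega
    rw [this]; exact hjS.2

private lemma open_piece {n : ℕ} {p : ℕ → ℝ} (hn : 0 < n) (hp0 : p 0 = 0) (hp1 : p n = 1)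
    (hlt : ∀ i < n, p i < p (i + 1)) {x : ℝ} (hx0 : 0 < x) (hx1 : x < 1)
    (hx : ∀ i ≤ n, p i ≠ x) : ∃ i < n, p i < x ∧ x < p (i + 1) := by
  obtain ⟨i, hi, h1, h2⟩ := piece_left hn hp0 hp1 hlt hx0 hx1.le
  exact ⟨i, hi, h1, lt_of_le_of_ne h2 (fun h => hx (i + 1) (by omega) h.symm)⟩

private lemma slope_ne_zero {g : ℝ → ℝ}
    (hm : MapsTo g (Icc (0:ℝ) 1) (Icc (0:ℝ) 1))
    (hpres : ∀ A ⊆ Icc (0:ℝ) 1, MeasurableSet A →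
      volume (g ⁻¹' A ∩ Icc 0 1) = volume A)
    {a b s c : ℝ} (hab : a < b) (ha : 0 ≤ a) (hb : b ≤ 1)
    (haff : ∀ z ∈ Icc a b, g z = s * z + c) : s ≠ 0 := by
  intro hs
  subst hs
  have hmem : c ∈ Icc (0:ℝ) 1 := by
    have h := hm (show a ∈ Icc (0:ℝ) 1 from ⟨ha, hab.le.trans hb⟩)
    rwa [haff a ⟨le_rfl, hab.le⟩, zero_mul, zero_add] at h
  have h0 := hpres {c} (singleton_subset_iff.mpr hmem) (measurableSet_singleton c)
  have hsub : Icc a b ⊆ g ⁻¹' {c} ∩ Icc 0 1 := fun z hz =>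
    ⟨by simp [haff z hz], ⟨ha.trans hz.1, hz.2.trans hb⟩⟩
  have hle : volume (Icc a b) ≤ volume (g ⁻¹' {c} ∩ Icc 0 1) := measure_mono hsub
  rw [h0, Real.volume_singleton, Real.volume_Icc] at hle
  have := le_antisymm hle (by positivity)
  rw [ENNReal.ofReal_eq_zero] at this
  linarith

private lemma left_affine {g : ℝ → ℝ} (hp : PWAffine g)
    (hm : MapsTo g (Icc (0:ℝ) 1) (Icc (0:ℝ) 1))
    (hpres : ∀ A ⊆ Icc (0:ℝ) 1, MeasurableSet A →
      volume (g ⁻¹' A ∩ Icc 0 1) = volume A)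
    {x : ℝ} (hx0 : 0 < x) (hx1 : x ≤ 1) :
    ∃ δ > 0, δ ≤ x ∧ ∃ s b : ℝ, s ≠ 0 ∧ ∀ z ∈ Icc (x - δ) x, g z = s * z + b := by
  obtain ⟨n, p, hn, hp0, hp1, hlt, haff⟩ := hp
  obtain ⟨i, hi, h1, h2⟩ := piece_left hn hp0 hp1 hlt hx0 hx1
  obtain ⟨s, b, hsb⟩ := haff i hi
  have hpi0 : 0 ≤ p i := by
    rw [← hp0]; exact pmono_le hlt i (by omega) 0 (by omega)
  have hsub : Icc (p i) x ⊆ Icc (p i) (p (i + 1)) := Icc_subset_Icc le_rfl h2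
  have hs : s ≠ 0 := slope_ne_zero hm hpres h1 hpi0 hx1 (fun z hz => hsb z (hsub hz))
  refine ⟨x - p i, by linarith, by linarith, s, b, hs, fun z hz => ?_⟩
  have : z ∈ Icc (p i) x := by
    constructor <;> [linarith [hz.1]; exact hz.2]
  exact hsb z (hsub this)

private lemma right_affine {g : ℝ → ℝ} (hp : PWAffine g)
    (hm : MapsTo g (Icc (0:ℝ) 1) (Icc (0:ℝ) 1))
    (hpres : ∀ A ⊆ Icc (0:ℝ) 1, MeasurableSet A →
      volume (g ⁻¹' A ∩ Icc 0 1) = volume A)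
    {x : ℝ} (hx0 : 0 ≤ x) (hx1 : x < 1) :
    ∃ δ > 0, x + δ ≤ 1 ∧ ∃ s b : ℝ, s ≠ 0 ∧ ∀ z ∈ Icc x (x + δ), g z = s * z + b := by
  obtain ⟨n, p, hn, hp0, hp1, hlt, haff⟩ := hp
  obtain ⟨i, hi, h1, h2⟩ := piece_right hn hp0 hp1 hlt hx0 hx1
  obtain ⟨s, b, hsb⟩ := haff i hi
  have hpi1 : p (i + 1) ≤ 1 := by
    rw [← hp1]; exact pmono_le hlt n (le_rfl) (i + 1) (by omega)
  have hpi0 : 0 ≤ p i := by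
    rw [← hp0]; exact pmono_le hlt i (by omega) 0 (by omega)
  have hsub : Icc x (p (i + 1)) ⊆ Icc (p i) (p (i + 1)) := Icc_subset_Icc h1 le_rfl
  have hs : s ≠ 0 := slope_ne_zero hm hpres h2 (hpi0.trans h1) hpi1
    (fun z hz => hsb z (hsub hz))
  refine ⟨p (i + 1) - x, by linarith, by linarith, s, b, hs, fun z hz => ?_⟩
  have : z ∈ Icc x (p (i + 1)) := by
    constructor <;> [exact hz.1; linarith [hz.2]]
  exact hsb z (hsub this)

private lemma typeII_finite {g : ℝ → ℝ} (hp : PWAffine g) : {x | IsTypeII g x}.Finite := by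
  obtain ⟨n, p, hn, hp0, hp1, hlt, haff⟩ := hp
  apply Set.Finite.subset ((Set.finite_Iic n).image p)
  intro x hx
  obtain ⟨hx0, hx1, δ, hδ, s₁, b₁, s₂, b₂, hs, hl, hr⟩ := hx
  by_contra hmem
  have hne : ∀ i ≤ n, p i ≠ x := fun i hi h => hmem ⟨i, hi, h⟩
  obtain ⟨i, hi, h1, h2⟩ := open_piece hn hp0 hp1 hlt hx0 hx1 hne
  obtain ⟨s, b, hsb⟩ := haff i hi
  have e1 : s₁ = s := by
    apply aff_unique (f := g) (a := x - min δ (x - p i)) (b := x)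
    · have : 0 < min δ (x - p i) := lt_min hδ (by linarith)
      linarith
    · intro z hz
      exact hl z ⟨by have := min_le_left δ (x - p i); linarith [hz.1], hz.2⟩
    · intro z hz
      apply hsb
      have := min_le_right δ (x - p i)
      exact ⟨by linarith [hz.1], by linarith [hz.2]⟩
  have e2 : s₂ = s := by
    apply aff_unique (f := g) (a := x) (b := x + min δ (p (i + 1) - x))
    · have : 0 < min δ (p (i + 1) - x) := lt_min hδ (by linarith)
      linarith
    · intro z hz
      exact hr z ⟨hz.1, by have := min_le_left δ (p (i + 1) - x); linarith [hz.2]⟩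
    · intro z hz
      apply hsb
      have := min_le_right δ (p (i + 1) - x)
      exact ⟨by linarith [hz.1], by linarith [hz.2]⟩
  rw [e1, e2] at hs
  nlinarith [mul_self_nonneg s]

private lemma preimage_finite {g : ℝ → ℝ} (hp : PWAffine g)
    (hm : MapsTo g (Icc (0:ℝ) 1) (Icc (0:ℝ) 1))
    (hpres : ∀ A ⊆ Icc (0:ℝ) 1, MeasurableSet A →
      volume (g ⁻¹' A ∩ Icc 0 1) = volume A) (c : ℝ) :
    {x | x ∈ Icc (0:ℝ) 1 ∧ g x = c}.Finite := by
  obtain ⟨n, p, hn, hp0, hp1, hlt, haff⟩ := hp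
  have hcov : ∀ x ∈ Icc (0:ℝ) 1, ∃ i < n, x ∈ Icc (p i) (p (i + 1)) := by
    intro x hx
    rcases lt_or_eq_of_le hx.2 with h | h
    · obtain ⟨i, hi, h1, h2⟩ := piece_right hn hp0 hp1 hlt hx.1 h
      exact ⟨i, hi, h1, h2.le⟩
    · refine ⟨n - 1, by omega, ?_, ?_⟩
      · have hn1 : n - 1 + 1 = n := by omega
        have := pmono_le hlt n le_rfl (n - 1) (by omega)
        rw [h, ← hp1]
        exact this
      · have hn1 : n - 1 + 1 = n := by omega
        rw [hn1, hp1, h]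
  apply Set.Finite.subset
    (Set.Finite.biUnion (Set.finite_Iio n)
      (fun i (hi : i ∈ Iio n) => ?_))
  · intro x hx
    obtain ⟨i, hi, hmem⟩ := hcov x hx.1
    exact Set.mem_biUnion (show i ∈ Iio n from hi)
      (show x ∈ {z | z ∈ Icc (p i) (p (i+1)) ∧ g z = c} from ⟨hmem, hx.2⟩)
  · -- each piece's fiber
    have hin : i < n := hi
    obtain ⟨s, b, hsb⟩ := haff i hin
    have hpi0 : 0 ≤ p i := by rw [← hp0]; exact pmono_le hlt i (by omega) 0 (by omega)
    have hpi1 : p (i + 1) ≤ 1 := by rw [← hp1]; exact pmono_le hlt n le_rfl (i + 1) (by omega)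
    have hs : s ≠ 0 := slope_ne_zero hm hpres (hlt i hin) hpi0 hpi1 hsb
    apply Set.Finite.subset (Set.finite_singleton ((c - b) / s))
    rintro z ⟨hz, hgz⟩
    have : s * z + b = c := by rw [← hsb z hz, hgz]
    have : z = (c - b) / s := by field_simp; linarith
    simp [this]

private lemma comp_typeII_finite {g₁ g₂ : ℝ → ℝ} (h₁p : PWAffine g₁) (h₂p : PWAffine g₂)
    (h₂m : MapsTo g₂ (Icc (0:ℝ) 1) (Icc (0:ℝ) 1))
    (h₂pres : ∀ A ⊆ Icc (0:ℝ) 1, MeasurableSet A →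
      volume (g₂ ⁻¹' A ∩ Icc 0 1) = volume A) :
    {x | IsTypeII (g₁ ∘ g₂) x}.Finite := by
  obtain ⟨n, p, hn, hp0, hp1, hplt, hpaff⟩ := h₁p
  obtain ⟨m, q, hm', hq0, hq1, hqlt, hqaff⟩ := h₂p
  apply Set.Finite.subset
    (Set.Finite.union ((Set.finite_Iic m).image q)
      (Set.Finite.biUnion (Set.finite_Iic n)
        (fun j _ => preimage_finite ⟨m, q, hm', hq0, hq1, hqlt, hqaff⟩ h₂m h₂pres (p j))))
  intro x hx
  by_contra hmem
  obtain ⟨hx0, hx1, δ, hδ, s₁, b₁, s₂, b₂, hs, hl, hr⟩ := hx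
  have hxI : x ∈ Icc (0:ℝ) 1 := ⟨hx0.le, hx1.le⟩
  have hmem1 : ∀ i ≤ m, q i ≠ x := fun i hi h => hmem (Or.inl ⟨i, hi, h⟩)
  have hmem2 : ∀ j ≤ n, g₂ x ≠ p j := fun j hj h =>
    hmem (Or.inr (Set.mem_biUnion (show j ∈ Iic n from hj)
      (show x ∈ {z | z ∈ Icc (0:ℝ) 1 ∧ g₂ z = p j} from ⟨hxI, h⟩)))
  -- x is interior to a piece of g₂
  obtain ⟨i, hi, hqi1, hqi2⟩ := open_piece hm' hq0 hq1 hqlt hx0 hx1 hmem1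
  obtain ⟨s, b, hsb⟩ := hqaff i hi
  have hqi0 : 0 ≤ q i := by rw [← hq0]; exact pmono_le hqlt i (by omega) 0 (by omega)
  have hqI1 : q (i + 1) ≤ 1 := by rw [← hq1]; exact pmono_le hqlt m le_rfl (i + 1) (by omega)
  have hsne : s ≠ 0 := slope_ne_zero h₂m h₂pres (hqlt i hi) hqi0 hqI1 hsb
  set y := g₂ x with hy
  have hyI : y ∈ Icc (0:ℝ) 1 := h₂m hxI
  have hy0 : 0 < y := lt_of_le_of_ne hyI.1 (by rw [← hp0]; exact fun h => hmem2 0 (by omega) h.symm)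
  have hy1 : y < 1 := lt_of_le_of_ne hyI.2 (by rw [← hp1]; exact fun h => hmem2 n le_rfl h)
  obtain ⟨j, hj, hpj1, hpj2⟩ := open_piece hn hp0 hp1 hplt hy0 hy1
    (fun j hjn h => hmem2 j hjn h.symm)
  obtain ⟨t, c, htc⟩ := hpaff j hj
  -- choose a small δ* so that g₂ maps (x - δ*, x + δ*) into [p j, p (j+1)]
  have habs : 0 < |s| := abs_pos.mpr hsne
  set d : ℝ := min (min (x - q i) (q (i + 1) - x)) (min ((y - p j) / |s|) ((p (j + 1) - y) / |s|))
    with hd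
  have hd0 : 0 < d := by
    apply lt_min (lt_min (by linarith) (by linarith))
    exact lt_min (div_pos (by linarith) habs) (div_pos (by linarith) habs)
  have hyx : y = s * x + b := hsb x ⟨hqi1.le, hqi2.le⟩
  have hdA : d ≤ x - q i := le_trans (min_le_left _ _) (min_le_left _ _)
  have hdB : d ≤ q (i + 1) - x := le_trans (min_le_left _ _) (min_le_right _ _)
  have hdC : d * |s| ≤ y - p j := (le_div_iff₀ habs).mp (le_trans (min_le_right _ _) (min_le_left _ _))
  have hdD : d * |s| ≤ p (j + 1) - y := (le_div_iff₀ habs).mp (le_trans (min_le_right _ _) (min_le_right _ _))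
  have key : ∀ z ∈ Icc (x - d) (x + d), (g₁ ∘ g₂) z = (t * s) * z + (t * b + c) := by
    intro z hz
    have hzq : z ∈ Icc (q i) (q (i + 1)) := ⟨by linarith [hz.1], by linarith [hz.2]⟩
    have hg2z : g₂ z = s * z + b := hsb z hzq
    have habsz : |s * (z - x)| ≤ |s| * d := by
      rw [abs_mul]
      exact mul_le_mul_of_nonneg_left (abs_le.mpr ⟨by linarith [hz.1], by linarith [hz.2]⟩)
        (abs_nonneg s)
    have hid : g₂ z - y = s * (z - x) := by rw [hg2z, hyx]; ring
    have hlow := neg_abs_le (s * (z - x))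
    have hupp := le_abs_self (s * (z - x))
    have hmemj : g₂ z ∈ Icc (p j) (p (j + 1)) := by
      constructor
      · nlinarith
      · nlinarith
    have : g₁ (g₂ z) = t * (g₂ z) + c := htc _ hmemj
    show g₁ (g₂ z) = _
    rw [this, hg2z]; ring
  -- uniqueness of slopes forces s₁ = s₂ = t * s, contradiction
  have e1 : s₁ = t * s := by
    apply aff_unique (f := g₁ ∘ g₂) (a := x - min δ d) (b := x)
    · have : 0 < min δ d := lt_min hδ hd0
      linarith
    · exact fun z hz => hl z ⟨by linarith [hz.1, min_le_left δ d], hz.2⟩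
    · exact fun z hz => key z ⟨by linarith [hz.1, min_le_right δ d], by linarith [hz.2, hd0]⟩
  have e2 : s₂ = t * s := by
    apply aff_unique (f := g₁ ∘ g₂) (a := x) (b := x + min δ d)
    · have : 0 < min δ d := lt_min hδ hd0
      linarith
    · exact fun z hz => hr z ⟨hz.1, by linarith [hz.2, min_le_left δ d]⟩
    · exact fun z hz => key z ⟨by linarith [hz.1, hd0], by linarith [hz.2, min_le_right δ d]⟩
  rw [e1, e2] at hs
  nlinarith [mul_self_nonneg (t * s)]

private lemma claimA {g₁ g₂ : ℝ → ℝ} (h₁p : PWAffine g₁)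
    (h₁m : MapsTo g₁ (Icc (0:ℝ) 1) (Icc (0:ℝ) 1))
    (h₁pres : ∀ A ⊆ Icc (0:ℝ) 1, MeasurableSet A →
      volume (g₁ ⁻¹' A ∩ Icc 0 1) = volume A)
    (h₂m : MapsTo g₂ (Icc (0:ℝ) 1) (Icc (0:ℝ) 1))
    {x : ℝ} (hx : IsTypeII g₂ x) : IsTypeII (g₁ ∘ g₂) x := by
  obtain ⟨hx0, hx1, δ, hδ, s₁, b₁, s₂, b₂, hs, hl, hr⟩ := hx
  refine ⟨hx0, hx1, ?_⟩
  have hyx1 : g₂ x = s₁ * x + b₁ := hl x ⟨by linarith, le_rfl⟩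
  have hyx2 : g₂ x = s₂ * x + b₂ := hr x ⟨le_rfl, by linarith⟩
  set y := g₂ x with hy
  have hyI : y ∈ Icc (0:ℝ) 1 := h₂m ⟨hx0.le, hx1.le⟩
  rcases lt_or_gt_of_ne (fun h : s₁ = 0 => by rw [h, zero_mul] at hs; exact lt_irrefl 0 hs) with hs₁ | hs₁
  · -- s₁ < 0, hence s₂ > 0 : local minimum at x
    have hs₂ : 0 < s₂ := by nlinarith
    -- y < 1
    have hy1 : y < 1 := by
      set z := x + min δ (1 - x) with hz
      have hzpos : 0 < min δ (1 - x) := lt_min hδ (by linarith)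
      have hzmem : z ∈ Icc x (x + δ) := ⟨by linarith, by simp [hz]⟩
      have hzI : z ∈ Icc (0:ℝ) 1 := ⟨by linarith, by
        have := min_le_right δ (1 - x); simp only [hz]; linarith⟩
      have hgz : g₂ z = y + s₂ * min δ (1 - x) := by rw [hr z hzmem, hyx2]; ring
      have := (h₂m hzI).2
      nlinarith
    obtain ⟨ε, hε, hε1, t, c, ht, htc⟩ := right_affine h₁p h₁m h₁pres hyI.1 hy1
    set d := min δ (min (ε / (-s₁)) (ε / s₂)) with hd
    have hd0 : 0 < d := lt_min hδ (lt_min (div_pos hε (by linarith)) (div_pos hε hs₂))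
    have hdδ : d ≤ δ := min_le_left _ _
    have hdl : d * (-s₁) ≤ ε := (le_div_iff₀ (by linarith)).mp
      ((min_le_right _ _).trans (min_le_left _ _))
    have hdr : d * s₂ ≤ ε := (le_div_iff₀ hs₂).mp
      ((min_le_right _ _).trans (min_le_right _ _))
    refine ⟨d, hd0, t * s₁, t * b₁ + c, t * s₂, t * b₂ + c, by nlinarith [mul_self_pos.mpr ht], ?_, ?_⟩
    · intro z hz
      have hzm : z ∈ Icc (x - δ) x := ⟨by linarith [hz.1], hz.2⟩
      have hg2z : g₂ z = s₁ * z + b₁ := hl z hzm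
      have hmemy : g₂ z ∈ Icc y (y + ε) := by
        constructor
        · nlinarith [hz.2]
        · nlinarith [hz.1]
      have : g₁ (g₂ z) = t * (g₂ z) + c := htc _ hmemy
      show g₁ (g₂ z) = _
      rw [this, hg2z]; ring
    · intro z hz
      have hzm : z ∈ Icc x (x + δ) := ⟨hz.1, by linarith [hz.2]⟩
      have hg2z : g₂ z = s₂ * z + b₂ := hr z hzm
      have hmemy : g₂ z ∈ Icc y (y + ε) := by
        constructor
        · nlinarith [hz.1]
        · nlinarith [hz.2]
      have : g₁ (g₂ z) = t * (g₂ z) + c := htc _ hmemy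
      show g₁ (g₂ z) = _
      rw [this, hg2z]; ring
  · -- s₁ > 0, hence s₂ < 0 : local maximum at x
    have hs₂ : s₂ < 0 := by nlinarith
    have hy0 : 0 < y := by
      set z := x - min δ x with hz
      have hzpos : 0 < min δ x := lt_min hδ hx0
      have hzmem : z ∈ Icc (x - δ) x := ⟨by
        have := min_le_left δ x; simp only [hz]; linarith, by linarith⟩
      have hzI : z ∈ Icc (0:ℝ) 1 := ⟨by
        have := min_le_right δ x; simp only [hz]; linarith, by linarith⟩
      have hgz : g₂ z = y - s₁ * min δ x := by rw [hl z hzmem, hyx1]; ring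
      have := (h₂m hzI).1
      nlinarith
    obtain ⟨ε, hε, hε1, t, c, ht, htc⟩ := left_affine h₁p h₁m h₁pres hy0 hyI.2
    set d := min δ (min (ε / s₁) (ε / (-s₂))) with hd
    have hd0 : 0 < d := lt_min hδ (lt_min (div_pos hε hs₁) (div_pos hε (by linarith)))
    have hdδ : d ≤ δ := min_le_left _ _
    have hdl : d * s₁ ≤ ε := (le_div_iff₀ hs₁).mp
      ((min_le_right _ _).trans (min_le_left _ _))
    have hdr : d * (-s₂) ≤ ε := (le_div_iff₀ (by linarith)).mp
      ((min_le_right _ _).trans (min_le_right _ _))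
    refine ⟨d, hd0, t * s₁, t * b₁ + c, t * s₂, t * b₂ + c, by nlinarith [mul_self_pos.mpr ht], ?_, ?_⟩
    · intro z hz
      have hzm : z ∈ Icc (x - δ) x := ⟨by linarith [hz.1], hz.2⟩
      have hg2z : g₂ z = s₁ * z + b₁ := hl z hzm
      have hmemy : g₂ z ∈ Icc (y - ε) y := by
        constructor
        · nlinarith [hz.1]
        · nlinarith [hz.2]
      have : g₁ (g₂ z) = t * (g₂ z) + c := htc _ hmemy
      show g₁ (g₂ z) = _
      rw [this, hg2z]; ring
    · intro z hz
      have hzm : z ∈ Icc x (x + δ) := ⟨hz.1, by linarith [hz.2]⟩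
      have hg2z : g₂ z = s₂ * z + b₂ := hr z hzm
      have hmemy : g₂ z ∈ Icc (y - ε) y := by
        constructor
        · nlinarith [hz.2]
        · nlinarith [hz.1]
      have : g₁ (g₂ z) = t * (g₂ z) + c := htc _ hmemy
      show g₁ (g₂ z) = _
      rw [this, hg2z]; ring

private lemma exists_crossing {g : ℝ → ℝ} (hp : PWAffine g)
    (hm : MapsTo g (Icc (0:ℝ) 1) (Icc (0:ℝ) 1))
    (hpres : ∀ A ⊆ Icc (0:ℝ) 1, MeasurableSet A →
      volume (g ⁻¹' A ∩ Icc 0 1) = volume A)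
    {y a b : ℝ} (ha0 : 0 ≤ a) (hb1 : b ≤ 1) (hab : a < b)
    (hay : g a < y) (hby : y < g b) :
    ∃ x, 0 < x ∧ x < 1 ∧ g x = y ∧
      ∃ δ > 0, ∃ s₁ b₁ s₂ b₂ : ℝ, 0 < s₁ * s₂ ∧
        (∀ z ∈ Icc (x - δ) x, g z = s₁ * z + b₁) ∧
        (∀ z ∈ Icc x (x + δ), g z = s₂ * z + b₂) := by
  set X : Set ℝ := {t | t ∈ Icc a b ∧ g t < y} with hX
  have haX : a ∈ X := ⟨⟨le_rfl, hab.le⟩, hay⟩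
  have hne : X.Nonempty := ⟨a, haX⟩
  have hbdd : BddAbove X := ⟨b, fun t ht => ht.1.2⟩
  set x := sSup X with hx
  have hax : a ≤ x := le_csSup hbdd haX
  have hxb : x ≤ b := csSup_le hne (fun t ht => ht.1.2)
  have F1 : ∀ t, x < t → t ≤ b → y ≤ g t := by
    intro t hxt htb
    by_contra h
    push_neg at h
    exact absurd (le_csSup hbdd (⟨⟨by linarith, htb⟩, h⟩ : t ∈ X)) (by linarith)
  have F2 : ∀ ε > 0, ∃ t ∈ X, x - ε < t := fun ε hε =>
    exists_lt_of_lt_csSup hne (by linarith)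
  -- x < b
  have hxltb : x < b := by
    obtain ⟨δb, hδb, hδbb, s, c, hsne, hsb⟩ := left_affine hp hm hpres (by linarith : (0:ℝ) < b) hb1
    set η := min δb ((g b - y) / (|s| + 1)) with hη
    have hspos : 0 < |s| + 1 := by positivity
    have hη0 : 0 < η := lt_min hδb (div_pos (by linarith) hspos)
    have hηδ : η ≤ δb := min_le_left _ _
    have hηs : η * (|s| + 1) ≤ g b - y := (le_div_iff₀ hspos).mp (min_le_right _ _)
    have hclaim : ∀ t ∈ X, t ≤ b - η := by
      intro t ht
      by_contra hc
      push_neg at hc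
      have htm : t ∈ Icc (b - δb) b := ⟨by linarith, ht.1.2⟩
      have hgt : g t = s * t + c := hsb t htm
      have hgb : g b = s * b + c := hsb b ⟨by linarith, le_rfl⟩
      have h1 : |s * (t - b)| ≤ |s| * η := by
        rw [abs_mul]
        exact mul_le_mul_of_nonneg_left
          (abs_le.mpr ⟨by linarith [ht.1.2], by linarith [ht.1.2]⟩) (abs_nonneg s)
      have h2 := neg_abs_le (s * (t - b))
      have hid : g t - g b = s * (t - b) := by rw [hgt, hgb]; ring
      have : y < g t := by nlinarith [abs_nonneg s]
      linarith [ht.2]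
    have := csSup_le hne hclaim
    linarith
  -- a < x
  have haltx : a < x := by
    obtain ⟨δa, hδa, hδa1, s, c, hsne, hsb⟩ := right_affine hp hm hpres ha0 (by linarith : a < 1)
    set η := min (min δa (b - a)) ((y - g a) / (|s| + 1)) with hη
    have hspos : 0 < |s| + 1 := by positivity
    have hη0 : 0 < η := lt_min (lt_min hδa (by linarith)) (div_pos (by linarith) hspos)
    have hηδ : η ≤ δa := (min_le_left _ _).trans (min_le_left _ _)
    have hηb : η ≤ b - a := (min_le_left _ _).trans (min_le_right _ _)
    have hηs : η * (|s| + 1) ≤ y - g a := (le_div_iff₀ hspos).mp (min_le_right _ _)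
    have hga : g a = s * a + c := hsb a ⟨le_rfl, by linarith⟩
    have hgt : g (a + η) = s * (a + η) + c := hsb (a + η) ⟨by linarith, by linarith⟩
    have hmem : a + η ∈ X := by
      refine ⟨⟨by linarith, by linarith⟩, ?_⟩
      have h1 : |s * η| ≤ |s| * η := by rw [abs_mul, abs_of_pos hη0]
      have h2 := le_abs_self (s * η)
      nlinarith [abs_nonneg s]
    have := le_csSup hbdd hmem
    linarith
  have hx0 : 0 < x := lt_of_le_of_lt ha0 haltx
  have hx1 : x < 1 := lt_of_lt_of_le hxltb hb1
  obtain ⟨δl, hδl, hδlx, s₁, b₁, hs₁ne, hsb₁⟩ := left_affine hp hm hpres hx0 hx1.le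
  obtain ⟨δr, hδr, hδr1, s₂, b₂, hs₂ne, hsb₂⟩ := right_affine hp hm hpres hx0.le hx1
  -- g x = y
  have hgxy : g x = y := by
    rcases lt_trichotomy (g x) y with h | h | h
    · -- impossible: points just right of x would need g ≥ y
      exfalso
      set η := min (min δr (b - x)) ((y - g x) / (|s₂| + 1)) with hη
      have hspos : 0 < |s₂| + 1 := by positivity
      have hη0 : 0 < η := lt_min (lt_min hδr (by linarith)) (div_pos (by linarith) hspos)
      have hηδ : η ≤ δr := (min_le_left _ _).trans (min_le_left _ _)
      have hηb : η ≤ b - x := (min_le_left _ _).trans (min_le_right _ _)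
      have hηs : η * (|s₂| + 1) ≤ y - g x := (le_div_iff₀ hspos).mp (min_le_right _ _)
      have hgx : g x = s₂ * x + b₂ := hsb₂ x ⟨le_rfl, by linarith⟩
      have hgt : g (x + η) = s₂ * (x + η) + b₂ := hsb₂ (x + η) ⟨by linarith, by linarith⟩
      have hF := F1 (x + η) (by linarith) (by linarith)
      have h2 := le_abs_self (s₂ * η)
      have h1 : |s₂ * η| ≤ |s₂| * η := by rw [abs_mul, abs_of_pos hη0]
      nlinarith [abs_nonneg s₂]
    · exact h
    · -- impossible: there are points of X just left of x with g < y
      exfalso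
      set η := min δl ((g x - y) / (|s₁| + 1)) with hη
      have hspos : 0 < |s₁| + 1 := by positivity
      have hη0 : 0 < η := lt_min hδl (div_pos (by linarith) hspos)
      have hηδ : η ≤ δl := min_le_left _ _
      have hηs : η * (|s₁| + 1) ≤ g x - y := (le_div_iff₀ hspos).mp (min_le_right _ _)
      obtain ⟨t, htX, htx⟩ := F2 η hη0
      have htlex : t ≤ x := le_csSup hbdd htX
      have hgx : g x = s₁ * x + b₁ := hsb₁ x ⟨by linarith, le_rfl⟩
      have hgt : g t = s₁ * t + b₁ := hsb₁ t ⟨by linarith, htlex⟩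
      have h1 : |s₁ * (t - x)| ≤ |s₁| * η := by
        rw [abs_mul]
        exact mul_le_mul_of_nonneg_left (abs_le.mpr ⟨by linarith, by linarith⟩) (abs_nonneg s₁)
      have h2 := neg_abs_le (s₁ * (t - x))
      have hid : g t - g x = s₁ * (t - x) := by rw [hgt, hgx]; ring
      have : y < g t := by nlinarith [abs_nonneg s₁]
      linarith [htX.2]
  -- s₁ > 0
  have hs₁pos : 0 < s₁ := by
    obtain ⟨t, htX, htx⟩ := F2 δl hδl
    have htlex : t ≤ x := le_csSup hbdd htX
    have htltx : t < x := lt_of_le_of_ne htlex (fun h => by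
      have h2 := htX.2; rw [h, hgxy] at h2; exact lt_irrefl y h2)
    have hgx : g x = s₁ * x + b₁ := hsb₁ x ⟨by linarith, le_rfl⟩
    have hgt : g t = s₁ * t + b₁ := hsb₁ t ⟨by linarith, htlex⟩
    by_contra hc
    push_neg at hc
    have : s₁ * (x - t) ≤ 0 := mul_nonpos_of_nonpos_of_nonneg hc (by linarith)
    have : g x ≤ g t := by nlinarith
    rw [hgxy] at this
    linarith [htX.2]
  -- s₂ > 0
  have hs₂pos : 0 < s₂ := by
    set η := min δr (b - x) with hη
    have hη0 : 0 < η := lt_min hδr (by linarith)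
    have hgx : g x = s₂ * x + b₂ := hsb₂ x ⟨le_rfl, by linarith⟩
    have hgt : g (x + η) = s₂ * (x + η) + b₂ :=
      hsb₂ (x + η) ⟨by linarith, by linarith [min_le_left δr (b - x)]⟩
    have hF := F1 (x + η) (by linarith) (by linarith [min_le_right δr (b - x)])
    rcases lt_or_ge 0 s₂ with h | h
    · exact h
    · exfalso
      have hneg : s₂ < 0 := lt_of_le_of_ne h hs₂ne
      have h3 : s₂ * η < 0 := mul_neg_of_neg_of_pos hneg hη0
      have hid : g (x + η) - g x = s₂ * η := by rw [hgt, hgx]; ring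
      rw [hgxy] at hid
      linarith
  exact ⟨x, hx0, hx1, hgxy, min δl δr, lt_min hδl hδr, s₁, b₁, s₂, b₂, mul_pos hs₁pos hs₂pos,
    fun z hz => hsb₁ z ⟨by linarith [hz.1, min_le_left δl δr], hz.2⟩,
    fun z hz => hsb₂ z ⟨hz.1, by linarith [hz.2, min_le_right δl δr]⟩⟩

private lemma exists_crossing' {g : ℝ → ℝ} (hp : PWAffine g)
    (hm : MapsTo g (Icc (0:ℝ) 1) (Icc (0:ℝ) 1))
    (hpres : ∀ A ⊆ Icc (0:ℝ) 1, MeasurableSet A →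
      volume (g ⁻¹' A ∩ Icc 0 1) = volume A)
    {y a b : ℝ} (hb0 : 0 ≤ b) (ha1 : a ≤ 1) (hba : b < a)
    (hay : g a < y) (hby : y < g b) :
    ∃ x, 0 < x ∧ x < 1 ∧ g x = y ∧
      ∃ δ > 0, ∃ s₁ b₁ s₂ b₂ : ℝ, 0 < s₁ * s₂ ∧
        (∀ z ∈ Icc (x - δ) x, g z = s₁ * z + b₁) ∧
        (∀ z ∈ Icc x (x + δ), g z = s₂ * z + b₂) := by
  set X : Set ℝ := {t | t ∈ Icc b a ∧ g t < y} with hX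
  have haX : a ∈ X := ⟨⟨hba.le, le_rfl⟩, hay⟩
  have hne : X.Nonempty := ⟨a, haX⟩
  have hbdd : BddBelow X := ⟨b, fun t ht => ht.1.1⟩
  set x := sInf X with hx
  have hbx : b ≤ x := le_csInf hne (fun t ht => ht.1.1)
  have hxa : x ≤ a := csInf_le hbdd haX
  have F1 : ∀ t, b ≤ t → t < x → y ≤ g t := by
    intro t hbt htx
    by_contra h
    push_neg at h
    exact absurd (csInf_le hbdd (⟨⟨hbt, by linarith⟩, h⟩ : t ∈ X)) (by linarith)
  have F2 : ∀ ε > 0, ∃ t ∈ X, t < x + ε := fun ε hε =>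
    exists_lt_of_csInf_lt hne (by linarith)
  -- b < x
  have hbltx : b < x := by
    obtain ⟨δb, hδb, hδb1, s, c, hsne, hsb⟩ := right_affine hp hm hpres hb0 (by linarith : b < 1)
    set η := min δb ((g b - y) / (|s| + 1)) with hη
    have hspos : 0 < |s| + 1 := by positivity
    have hη0 : 0 < η := lt_min hδb (div_pos (by linarith) hspos)
    have hηδ : η ≤ δb := min_le_left _ _
    have hηs : η * (|s| + 1) ≤ g b - y := (le_div_iff₀ hspos).mp (min_le_right _ _)
    have hclaim : ∀ t ∈ X, b + η ≤ t := by
      intro t ht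
      by_contra hc
      push_neg at hc
      have htm : t ∈ Icc b (b + δb) := ⟨ht.1.1, by linarith⟩
      have hgt : g t = s * t + c := hsb t htm
      have hgb : g b = s * b + c := hsb b ⟨le_rfl, by linarith⟩
      have h1 : |s * (t - b)| ≤ |s| * η := by
        rw [abs_mul]
        exact mul_le_mul_of_nonneg_left
          (abs_le.mpr ⟨by linarith [ht.1.1], by linarith [ht.1.1]⟩) (abs_nonneg s)
      have h2 := neg_abs_le (s * (t - b))
      have hid : g t - g b = s * (t - b) := by rw [hgt, hgb]; ring
      have : y < g t := by nlinarith [abs_nonneg s]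
      linarith [ht.2]
    have := le_csInf hne hclaim
    linarith
  -- x < a
  have hxlta : x < a := by
    obtain ⟨δa, hδa, hδax, s, c, hsne, hsb⟩ := left_affine hp hm hpres (by linarith : (0:ℝ) < a) ha1
    set η := min (min δa (a - b)) ((y - g a) / (|s| + 1)) with hη
    have hspos : 0 < |s| + 1 := by positivity
    have hη0 : 0 < η := lt_min (lt_min hδa (by linarith)) (div_pos (by linarith) hspos)
    have hηδ : η ≤ δa := (min_le_left _ _).trans (min_le_left _ _)
    have hηb : η ≤ a - b := (min_le_left _ _).trans (min_le_right _ _)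
    have hηs : η * (|s| + 1) ≤ y - g a := (le_div_iff₀ hspos).mp (min_le_right _ _)
    have hga : g a = s * a + c := hsb a ⟨by linarith, le_rfl⟩
    have hgt : g (a - η) = s * (a - η) + c := hsb (a - η) ⟨by linarith, by linarith⟩
    have hmem : a - η ∈ X := by
      refine ⟨⟨by linarith, by linarith⟩, ?_⟩
      have h1 : |s * η| ≤ |s| * η := by rw [abs_mul, abs_of_pos hη0]
      have h2 := neg_abs_le (s * η)
      nlinarith [abs_nonneg s]
    have := csInf_le hbdd hmem
    linarith
  have hx0 : 0 < x := lt_of_le_of_lt hb0 hbltx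
  have hx1 : x < 1 := lt_of_lt_of_le hxlta ha1
  obtain ⟨δl, hδl, hδlx, s₁, b₁, hs₁ne, hsb₁⟩ := left_affine hp hm hpres hx0 hx1.le
  obtain ⟨δr, hδr, hδr1, s₂, b₂, hs₂ne, hsb₂⟩ := right_affine hp hm hpres hx0.le hx1
  -- g x = y
  have hgxy : g x = y := by
    rcases lt_trichotomy (g x) y with h | h | h
    · -- impossible: points just left of x would need g ≥ y
      exfalso
      set η := min (min δl (x - b)) ((y - g x) / (|s₁| + 1)) with hη
      have hspos : 0 < |s₁| + 1 := by positivity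
      have hη0 : 0 < η := lt_min (lt_min hδl (by linarith)) (div_pos (by linarith) hspos)
      have hηδ : η ≤ δl := (min_le_left _ _).trans (min_le_left _ _)
      have hηb : η ≤ x - b := (min_le_left _ _).trans (min_le_right _ _)
      have hηs : η * (|s₁| + 1) ≤ y - g x := (le_div_iff₀ hspos).mp (min_le_right _ _)
      have hgx : g x = s₁ * x + b₁ := hsb₁ x ⟨by linarith, le_rfl⟩
      have hgt : g (x - η) = s₁ * (x - η) + b₁ := hsb₁ (x - η) ⟨by linarith, by linarith⟩
      have hF := F1 (x - η) (by linarith) (by linarith)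
      have h2 := neg_abs_le (s₁ * η)
      have h1 : |s₁ * η| ≤ |s₁| * η := by rw [abs_mul, abs_of_pos hη0]
      nlinarith [abs_nonneg s₁]
    · exact h
    · -- impossible: there are points of X just right of x with g < y
      exfalso
      set η := min δr ((g x - y) / (|s₂| + 1)) with hη
      have hspos : 0 < |s₂| + 1 := by positivity
      have hη0 : 0 < η := lt_min hδr (div_pos (by linarith) hspos)
      have hηδ : η ≤ δr := min_le_left _ _
      have hηs : η * (|s₂| + 1) ≤ g x - y := (le_div_iff₀ hspos).mp (min_le_right _ _)
      obtain ⟨t, htX, htx⟩ := F2 η hη0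
      have htgex : x ≤ t := csInf_le hbdd htX
      have hgx : g x = s₂ * x + b₂ := hsb₂ x ⟨le_rfl, by linarith⟩
      have hgt : g t = s₂ * t + b₂ := hsb₂ t ⟨htgex, by linarith⟩
      have h1 : |s₂ * (t - x)| ≤ |s₂| * η := by
        rw [abs_mul]
        exact mul_le_mul_of_nonneg_left (abs_le.mpr ⟨by linarith, by linarith⟩) (abs_nonneg s₂)
      have h2 := neg_abs_le (s₂ * (t - x))
      have hid : g t - g x = s₂ * (t - x) := by rw [hgt, hgx]; ring
      have : y < g t := by nlinarith [abs_nonneg s₂]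
      linarith [htX.2]
  -- s₁ < 0
  have hs₁neg : s₁ < 0 := by
    set η := min δl (x - b) with hη
    have hη0 : 0 < η := lt_min hδl (by linarith)
    have hgx : g x = s₁ * x + b₁ := hsb₁ x ⟨by linarith, le_rfl⟩
    have hgt : g (x - η) = s₁ * (x - η) + b₁ :=
      hsb₁ (x - η) ⟨by linarith [min_le_left δl (x - b)], by linarith⟩
    have hF := F1 (x - η) (by linarith [min_le_right δl (x - b)]) (by linarith)
    rcases lt_or_ge s₁ 0 with h | h
    · exact h
    · exfalso
      have hneg : 0 < s₁ := lt_of_le_of_ne h (Ne.symm hs₁ne)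
      have h3 : 0 < s₁ * η := mul_pos hneg hη0
      have hid : g (x - η) - g x = -(s₁ * η) := by rw [hgt, hgx]; ring
      rw [hgxy] at hid
      linarith
  -- s₂ < 0
  have hs₂neg : s₂ < 0 := by
    obtain ⟨t, htX, htx⟩ := F2 δr hδr
    have htgex : x ≤ t := csInf_le hbdd htX
    have htgtx : x < t := lt_of_le_of_ne htgex (fun h => by
      have h2 := htX.2; rw [← h, hgxy] at h2; exact lt_irrefl y h2)
    have hgx : g x = s₂ * x + b₂ := hsb₂ x ⟨le_rfl, by linarith⟩
    have hgt : g t = s₂ * t + b₂ := hsb₂ t ⟨htgex, by linarith⟩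
    by_contra hc
    push_neg at hc
    have : 0 ≤ s₂ * (t - x) := mul_nonneg hc (by linarith)
    have : g x ≤ g t := by nlinarith
    rw [hgxy] at this
    linarith [htX.2]
  exact ⟨x, hx0, hx1, hgxy, min δl δr, lt_min hδl hδr, s₁, b₁, s₂, b₂,
    mul_pos_of_neg_of_neg hs₁neg hs₂neg,
    fun z hz => hsb₁ z ⟨by linarith [hz.1, min_le_left δl δr], hz.2⟩,
    fun z hz => hsb₂ z ⟨hz.1, by linarith [hz.2, min_le_right δl δr]⟩⟩

set_option maxHeartbeats 1000000 in
private lemma claimB {g₁ g₂ : ℝ → ℝ} (h₂p : PWAffine g₂)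
    (h₂m : MapsTo g₂ (Icc (0:ℝ) 1) (Icc (0:ℝ) 1))
    (h₂s : SurjOn g₂ (Icc (0:ℝ) 1) (Icc (0:ℝ) 1))
    (h₂pres : ∀ A ⊆ Icc (0:ℝ) 1, MeasurableSet A →
      volume (g₂ ⁻¹' A ∩ Icc 0 1) = volume A)
    {y : ℝ} (hy : IsTypeII g₁ y) :
    ∃ x, IsTypeII (g₁ ∘ g₂) x ∧ ¬ IsTypeII g₂ x ∧ g₂ x = y := by
  obtain ⟨hy0, hy1, ε, hε, t₁, c₁, t₂, c₂, ht, hL, hR⟩ := hy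
  obtain ⟨u, huI, hgu⟩ := h₂s (show (0:ℝ) ∈ Icc (0:ℝ) 1 from ⟨le_rfl, zero_le_one⟩)
  obtain ⟨v, hvI, hgv⟩ := h₂s (show (1:ℝ) ∈ Icc (0:ℝ) 1 from ⟨zero_le_one, le_rfl⟩)
  have hguy : g₂ u < y := by rw [hgu]; exact hy0
  have hgvy : y < g₂ v := by rw [hgv]; exact hy1
  have huv : u ≠ v := fun h => by rw [h, hgv] at hgu; norm_num at hgu
  have hcross : ∃ x, 0 < x ∧ x < 1 ∧ g₂ x = y ∧
      ∃ δ > 0, ∃ s₁ b₁ s₂ b₂ : ℝ, 0 < s₁ * s₂ ∧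
        (∀ z ∈ Icc (x - δ) x, g₂ z = s₁ * z + b₁) ∧
        (∀ z ∈ Icc x (x + δ), g₂ z = s₂ * z + b₂) := by
    rcases lt_or_gt_of_ne huv with h | h
    · exact exists_crossing h₂p h₂m h₂pres huI.1 hvI.2 h hguy hgvy
    · exact exists_crossing' h₂p h₂m h₂pres hvI.1 huI.2 h hguy hgvy
  obtain ⟨x, hx0, hx1, hgxy, δ, hδ, s₁, b₁, s₂, b₂, hss, hl, hr⟩ := hcross
  have hyx1 : y = s₁ * x + b₁ := by rw [← hgxy]; exact hl x ⟨by linarith, le_rfl⟩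
  have hyx2 : y = s₂ * x + b₂ := by rw [← hgxy]; exact hr x ⟨le_rfl, by linarith⟩
  have hs₁ne : s₁ ≠ 0 := fun h => by rw [h, zero_mul] at hss; exact lt_irrefl 0 hss
  refine ⟨x, ⟨hx0, hx1, ?_⟩, ?_, hgxy⟩
  · -- IsTypeII (g₁ ∘ g₂) x
    rcases lt_or_gt_of_ne hs₁ne with hs₁ | hs₁
    · -- both slopes negative: g₂ decreasing through y
      have hs₂ : s₂ < 0 := by nlinarith
      set d := min δ (min (ε / (-s₁)) (ε / (-s₂))) with hd
      have hd0 : 0 < d := lt_min hδ (lt_min (div_pos hε (by linarith)) (div_pos hε (by linarith)))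
      have hdδ : d ≤ δ := min_le_left _ _
      have hdl : d * (-s₁) ≤ ε := (le_div_iff₀ (by linarith)).mp
        ((min_le_right _ _).trans (min_le_left _ _))
      have hdr : d * (-s₂) ≤ ε := (le_div_iff₀ (by linarith)).mp
        ((min_le_right _ _).trans (min_le_right _ _))
      refine ⟨d, hd0, t₂ * s₁, t₂ * b₁ + c₂, t₁ * s₂, t₁ * b₂ + c₁, by nlinarith, ?_, ?_⟩
      · intro z hz
        have hg2z : g₂ z = s₁ * z + b₁ := hl z ⟨by linarith [hz.1], hz.2⟩
        have hmemy : g₂ z ∈ Icc y (y + ε) := by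
          constructor
          · nlinarith [hz.2]
          · nlinarith [hz.1]
        have : g₁ (g₂ z) = t₂ * (g₂ z) + c₂ := hR _ hmemy
        show g₁ (g₂ z) = _
        rw [this, hg2z]; ring
      · intro z hz
        have hg2z : g₂ z = s₂ * z + b₂ := hr z ⟨hz.1, by linarith [hz.2]⟩
        have hmemy : g₂ z ∈ Icc (y - ε) y := by
          constructor
          · nlinarith [hz.2]
          · nlinarith [hz.1]
        have : g₁ (g₂ z) = t₁ * (g₂ z) + c₁ := hL _ hmemy
        show g₁ (g₂ z) = _
        rw [this, hg2z]; ring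
    · -- both slopes positive: g₂ increasing through y
      have hs₂ : 0 < s₂ := by nlinarith
      set d := min δ (min (ε / s₁) (ε / s₂)) with hd
      have hd0 : 0 < d := lt_min hδ (lt_min (div_pos hε hs₁) (div_pos hε hs₂))
      have hdδ : d ≤ δ := min_le_left _ _
      have hdl : d * s₁ ≤ ε := (le_div_iff₀ hs₁).mp
        ((min_le_right _ _).trans (min_le_left _ _))
      have hdr : d * s₂ ≤ ε := (le_div_iff₀ hs₂).mp
        ((min_le_right _ _).trans (min_le_right _ _))
      refine ⟨d, hd0, t₁ * s₁, t₁ * b₁ + c₁, t₂ * s₂, t₂ * b₂ + c₂, by nlinarith, ?_, ?_⟩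
      · intro z hz
        have hg2z : g₂ z = s₁ * z + b₁ := hl z ⟨by linarith [hz.1], hz.2⟩
        have hmemy : g₂ z ∈ Icc (y - ε) y := by
          constructor
          · nlinarith [hz.1]
          · nlinarith [hz.2]
        have : g₁ (g₂ z) = t₁ * (g₂ z) + c₁ := hL _ hmemy
        show g₁ (g₂ z) = _
        rw [this, hg2z]; ring
      · intro z hz
        have hg2z : g₂ z = s₂ * z + b₂ := hr z ⟨hz.1, by linarith [hz.2]⟩
        have hmemy : g₂ z ∈ Icc y (y + ε) := by
          constructor
          · nlinarith [hz.1]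
          · nlinarith [hz.2]
        have : g₁ (g₂ z) = t₂ * (g₂ z) + c₂ := hR _ hmemy
        show g₁ (g₂ z) = _
        rw [this, hg2z]; ring
  · -- x is not a type II point of g₂
    rintro ⟨-, -, δ', hδ', s₁', b₁', s₂', b₂', hs', hl', hr'⟩
    have hmin : 0 < min δ δ' := lt_min hδ hδ'
    have e1 : s₁' = s₁ := by
      apply aff_unique (f := g₂) (a := x - min δ δ') (b := x) (by linarith)
      · exact fun z hz => hl' z ⟨by linarith [hz.1, min_le_right δ δ'], hz.2⟩
      · exact fun z hz => hl z ⟨by linarith [hz.1, min_le_left δ δ'], hz.2⟩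
    have e2 : s₂' = s₂ := by
      apply aff_unique (f := g₂) (a := x) (b := x + min δ δ') (by linarith)
      · exact fun z hz => hr' z ⟨hz.1, by linarith [hz.2, min_le_right δ δ']⟩
      · exact fun z hz => hr z ⟨hz.1, by linarith [hz.2, min_le_left δ δ']⟩
    rw [e1, e2] at hs'
    linarith

theorem stmt_12 (g₁ g₂ : ℝ → ℝ)
    (h₁c : ContinuousOn g₁ (Icc 0 1)) (h₂c : ContinuousOn g₂ (Icc 0 1))
    (h₁m : MapsTo g₁ (Icc (0:ℝ) 1) (Icc (0:ℝ) 1))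
    (h₂m : MapsTo g₂ (Icc (0:ℝ) 1) (Icc (0:ℝ) 1))
    (h₁s : SurjOn g₁ (Icc (0:ℝ) 1) (Icc (0:ℝ) 1))
    (h₂s : SurjOn g₂ (Icc (0:ℝ) 1) (Icc (0:ℝ) 1))
    (h₁p : PWAffine g₁) (h₂p : PWAffine g₂)
    (h₁pres : ∀ A ⊆ Icc (0:ℝ) 1, MeasurableSet A →
      volume (g₁ ⁻¹' A ∩ Icc 0 1) = volume A)
    (h₂pres : ∀ A ⊆ Icc (0:ℝ) 1, MeasurableSet A →
      volume (g₂ ⁻¹' A ∩ Icc 0 1) = volume A) :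
    {x : ℝ | IsTypeII g₁ x}.ncard + {x : ℝ | IsTypeII g₂ x}.ncard ≤
      {x : ℝ | IsTypeII (g₁ ∘ g₂) x}.ncard := by
  classical
  have hA : {x : ℝ | IsTypeII g₁ x}.Finite := typeII_finite h₁p
  have hB : {x : ℝ | IsTypeII g₂ x}.Finite := typeII_finite h₂p
  have hC : {x : ℝ | IsTypeII (g₁ ∘ g₂) x}.Finite := comp_typeII_finite h₁p h₂p h₂m h₂pres
  have hBsub : {x : ℝ | IsTypeII g₂ x} ⊆ {x : ℝ | IsTypeII (g₁ ∘ g₂) x} :=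
    fun x hx => claimA h₁p h₁m h₁pres h₂m hx
  have hch : ∀ y : ℝ, IsTypeII g₁ y →
      ∃ x, IsTypeII (g₁ ∘ g₂) x ∧ ¬ IsTypeII g₂ x ∧ g₂ x = y :=
    fun y hy => claimB h₂p h₂m h₂s h₂pres hy
  choose! f hf1 hf2 hf3 using hch
  have hinj : InjOn f {x : ℝ | IsTypeII g₁ x} := fun y hy y' hy' h => by
    rw [← hf3 y hy, ← hf3 y' hy', h]
  have himg : f '' {x : ℝ | IsTypeII g₁ x} ⊆
      {x : ℝ | IsTypeII (g₁ ∘ g₂) x} \ {x : ℝ | IsTypeII g₂ x} := by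
    rintro - ⟨y, hy, rfl⟩
    exact ⟨hf1 y hy, hf2 y hy⟩
  have hdisj : Disjoint (f '' {x : ℝ | IsTypeII g₁ x}) {x : ℝ | IsTypeII g₂ x} :=
    Set.disjoint_left.mpr (fun x hx hxB => (himg hx).2 hxB)
  calc {x : ℝ | IsTypeII g₁ x}.ncard + {x : ℝ | IsTypeII g₂ x}.ncard
      = (f '' {x : ℝ | IsTypeII g₁ x}).ncard + {x : ℝ | IsTypeII g₂ x}.ncard := by
        rw [Set.ncard_image_of_injOn hinj]
    _ = (f '' {x : ℝ | IsTypeII g₁ x} ∪ {x : ℝ | IsTypeII g₂ x}).ncard :=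
        (Set.ncard_union_eq hdisj (hA.image f) hB).symm
    _ ≤ {x : ℝ | IsTypeII (g₁ ∘ g₂) x}.ncard := by
        apply Set.ncard_le_ncard _ hC
        exact Set.union_subset (himg.trans (Set.diff_subset)) hBsub
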